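/- For every T ≥ 1, set N = 2T + 1 and k = 2. For every Decision Maker strategy σ that is an Approval Vote strategy, there exists an approval profile sequence S : Fin T → Fin N → Finset (Fin 2) whose conflict number is at most 1, such that in the play of σ against S some agent has dissatisfaction equal to T (i.e., is dissatisfied in every round). -/

import Mathlib

open Finset

/-- The option chosen by strategy `σ` against the approval profile sequence `S`
in round `r`: `σ` applied to the history `[S 0, …, S r]`. -/
def play {k N T : ℕ} (σ : List (Fin N → Finset (Fin k)) → Fin k)
    (S : Fin T → Fin N → Finset (Fin k)) (r : Fin T) : Fin k :=
  σ (List.ofFn (fun j : Fin (r.val + 1) => S (Fin.castLE r.isLt j)))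

/-- The dissatisfaction of agent `i` in the play of `σ` against `S`:
the number of rounds in which the chosen option is not approved by `i`. -/
def dissat {k N T : ℕ} (σ : List (Fin N → Finset (Fin k)) → Fin k)
    (S : Fin T → Fin N → Finset (Fin k)) (i : Fin N) : ℕ :=
  (Finset.univ.filter fun r : Fin T => play σ S r ∉ S r i).card

/-- The conflict number of `S` is at most `C`: every subset `A` of agents of size
at most `k` is in a conflict (no option satisfies everyone in `A`) in at most `C` rounds. -/
def conflictNumberLe {k N T : ℕ} (S : Fin T → Fin N → Finset (Fin k)) (C : ℕ) : Prop :=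
  ∀ A : Finset (Fin N), A.card ≤ k →
    (Finset.univ.filter fun r : Fin T => ¬ ∃ θ : Fin k, ∀ i ∈ A, θ ∈ S r i).card ≤ C

/-- A strategy is an Approval Vote strategy if, for every (nonempty) history,
the chosen option is approved by at least as many agents in the current round's
profile as any other option. -/
def ApprovalVote {k N : ℕ} (σ : List (Fin N → Finset (Fin k)) → Fin k) : Prop :=
  ∀ (h : List (Fin N → Finset (Fin k))) (p : Fin N → Finset (Fin k)) (θ' : Fin k),
    (Finset.univ.filter fun i : Fin N => θ' ∈ p i).card ≤
      (Finset.univ.filter fun i : Fin N => σ (h ++ [p]) ∈ p i).card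

theorem approval_vote_fails (T : ℕ) (hT : 1 ≤ T)
    (σ : List (Fin (2 * T + 1) → Finset (Fin 2)) → Fin 2)
    (hσ : ApprovalVote σ) :
    ∃ S : Fin T → Fin (2 * T + 1) → Finset (Fin 2),
      conflictNumberLe S 1 ∧ ∃ i : Fin (2 * T + 1), dissat σ S i = T := by
  classical
  set S : Fin T → Fin (2 * T + 1) → Finset (Fin 2) := fun r i =>
    if i.val = 0 then {1}
    else if i.val = 2 * r.val + 1 ∨ i.val = 2 * r.val + 2 then {0}
    else {0, 1} with hS
  have h0 : ∀ (r : Fin T) (i : Fin (2 * T + 1)), (0 : Fin 2) ∈ S r i ↔ i.val ≠ 0 := by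
    intro r i
    simp only [hS]
    split_ifs with h1 h2 <;> simp [h1, Fin.ext_iff]
  have h1 : ∀ (r : Fin T) (i : Fin (2 * T + 1)),
      (1 : Fin 2) ∈ S r i ↔ ¬ (i.val = 2 * r.val + 1 ∨ i.val = 2 * r.val + 2) := by
    intro r i
    simp only [hS]
    split_ifs with ha hb <;> simp [Fin.ext_iff] <;> omega
  have hc0 : ∀ r : Fin T,
      (Finset.univ.filter fun i : Fin (2 * T + 1) => (0 : Fin 2) ∈ S r i).card = 2 * T := by
    intro r
    have he : (Finset.univ.filter fun i : Fin (2 * T + 1) => (0 : Fin 2) ∈ S r i)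
        = Finset.univ \ {(⟨0, by omega⟩ : Fin (2 * T + 1))} := by
      ext i
      simp only [Finset.mem_filter, Finset.mem_univ, true_and, Finset.mem_sdiff,
        Finset.mem_singleton, h0 r i, Fin.ext_iff, Fin.val_mk, ne_eq]
    rw [he, Finset.card_sdiff_of_subset (by simp)]
    simp
  have hc1 : ∀ r : Fin T,
      (Finset.univ.filter fun i : Fin (2 * T + 1) => (1 : Fin 2) ∈ S r i).card = 2 * T - 1 := by
    intro r
    have he : (Finset.univ.filter fun i : Fin (2 * T + 1) => (1 : Fin 2) ∈ S r i)
        = Finset.univ \ {(⟨2 * r.val + 1, by omega⟩ : Fin (2 * T + 1)),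
            (⟨2 * r.val + 2, by omega⟩ : Fin (2 * T + 1))} := by
      ext i
      simp only [Finset.mem_filter, Finset.mem_univ, true_and, Finset.mem_sdiff,
        Finset.mem_insert, Finset.mem_singleton, h1 r i, Fin.ext_iff]
    rw [he, Finset.card_sdiff_of_subset (by simp)]
    rw [Finset.card_insert_of_notMem (by simp [Fin.ext_iff]), Finset.card_singleton]
    simp
  have hplay : ∀ r : Fin T, play σ S r = 0 := by
    intro r
    have hlast : S (Fin.castLE r.isLt (Fin.last r.val)) = S r := by
      congr 1
    have hdecomp : play σ S r
        = σ ((List.ofFn fun i : Fin r.val => S (Fin.castLE r.isLt i.castSucc)) ++ [S r]) := by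
      rw [play, List.ofFn_succ', List.concat_eq_append, hlast]
    have hkey := hσ (List.ofFn fun i : Fin r.val => S (Fin.castLE r.isLt i.castSucc)) (S r) 0
    rw [← hdecomp] at hkey
    rcases Fin.exists_fin_two.mp ⟨play σ S r, rfl⟩ with h | h
    · exact h
    · exfalso
      rw [h, hc0 r, hc1 r] at hkey
      omega
  refine ⟨S, ?_, ⟨⟨0, by omega⟩, ?_⟩⟩
  · intro A hA
    rw [Finset.card_le_one]
    intro r hr s hs
    simp only [Finset.mem_filter, Finset.mem_univ, true_and] at hr hs
    push_neg at hr hs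
    obtain ⟨jr, hjrA, hjr⟩ := hr 1
    obtain ⟨js, hjsA, hjs⟩ := hs 1
    obtain ⟨i0, hi0A, hi0⟩ := hr 0
    rw [h1] at hjr hjs
    rw [h0] at hi0
    push_neg at hjr hjs hi0
    have hjr' : jr.val = 2 * r.val + 1 ∨ jr.val = 2 * r.val + 2 := by tauto
    have hjs' : js.val = 2 * s.val + 1 ∨ js.val = 2 * s.val + 2 := by tauto
    have hne1 : i0 ≠ jr := by intro h; rw [h] at hi0; omega
    have hne2 : i0 ≠ js := by intro h; rw [h] at hi0; omega
    have hjrjs : jr = js := by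
      by_contra hne
      have hsub : ({i0, jr, js} : Finset (Fin (2 * T + 1))) ⊆ A := by
        intro x hx
        simp only [Finset.mem_insert, Finset.mem_singleton] at hx
        rcases hx with rfl | rfl | rfl <;> assumption
      have h3 : ({i0, jr, js} : Finset (Fin (2 * T + 1))).card = 3 := by
        rw [Finset.card_insert_of_notMem (by simp [hne1, hne2]),
          Finset.card_insert_of_notMem (by simp [hne]), Finset.card_singleton]
      have := Finset.card_le_card hsub
      omega
    rw [hjrjs] at hjr'
    apply Fin.ext
    omega
  · unfold dissat
    have he : (Finset.univ.filter fun r : Fin T =>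
        play σ S r ∉ S r (⟨0, by omega⟩ : Fin (2 * T + 1))) = Finset.univ := by
      ext r
      simp only [Finset.mem_filter, Finset.mem_univ, true_and, iff_true]
      rw [hplay r, h0]
      simp
    rw [he, Finset.card_univ, Fintype.card_fin]
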